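/- Combining the potential bounds: if losses ℓ_i(t) ≥ 0, weights evolve as W_i(t) = W_i(t−1)·exp(−η·ℓ_i(t)) with W_i(0) = 1, and q_i(t) = W_i(t−1)/W(t−1), then for every i* ∈ {1,…,N}: Σ_{t=1}^{T} Σ_i q_i(t)·ℓ_i(t) − Σ_{t=1}^{T} ℓ_{i*}(t) ≤ (log N)/η + (η/2)·Σ_{t=1}^{T} Σ_i q_i(t)·ℓ_i(t)². -/

import Mathlib

open Finset

lemma exp_neg_le_quad {x : ℝ} (hx : 0 ≤ x) : Real.exp (-x) ≤ 1 - x + x ^ 2 / 2 := by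
  have hder : ∀ z : ℝ, HasDerivAt (fun z : ℝ => 1 - z + z ^ 2 / 2 - Real.exp (-z))
      (z - 1 + Real.exp (-z)) z := by
    intro z
    have h1 : HasDerivAt (fun z : ℝ => Real.exp (-z)) (-Real.exp (-z)) z := by
      simpa [Function.comp_def] using (Real.hasDerivAt_exp (-z)).comp z (hasDerivAt_neg z)
    have h2 : HasDerivAt (fun z : ℝ => 1 - z + z ^ 2 / 2) (-1 + 2 * z ^ 1 / 2) z :=
      ((hasDerivAt_id z).const_sub 1).add ((hasDerivAt_pow 2 z).div_const 2)
    have := h2.sub h1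
    refine this.congr_deriv ?_
    ring
  have key : MonotoneOn (fun z : ℝ => 1 - z + z ^ 2 / 2 - Real.exp (-z)) (Set.Ici 0) := by
    apply monotoneOn_of_deriv_nonneg (convex_Ici 0)
    · exact Continuous.continuousOn (by fun_prop)
    · intro z hz
      exact (hder z).differentiableAt.differentiableWithinAt
    · intro z hz
      rw [(hder z).deriv]
      have := Real.add_one_le_exp (-z)
      linarith
  have h0 : (fun z : ℝ => 1 - z + z ^ 2 / 2 - Real.exp (-z)) 0 ≤
      (fun z : ℝ => 1 - z + z ^ 2 / 2 - Real.exp (-z)) x :=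
    key (Set.self_mem_Ici) hx hx
  simp only [neg_zero, Real.exp_zero] at h0
  nlinarith [h0]

theorem stmt_12 (N T : ℕ) (hN : 1 ≤ N) (η : ℝ) (hη : 0 < η)
    (ℓ : ℕ → ℕ → ℝ) (hℓ : ∀ i t, 0 ≤ ℓ i t)
    (W : ℕ → ℕ → ℝ) (hW0 : ∀ i, W i 0 = 1)
    (hWrec : ∀ i, ∀ t ≥ 1, W i t = W i (t - 1) * Real.exp (-η * ℓ i t))
    (Wtot : ℕ → ℝ) (hWtot : ∀ t, Wtot t = ∑ i ∈ Finset.range N, W i t)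
    (q : ℕ → ℕ → ℝ) (hq : ∀ i t, q i t = W i (t - 1) / Wtot (t - 1))
    (istar : ℕ) (histar : istar ∈ Finset.range N) :
    ∑ t ∈ Finset.Icc 1 T, ∑ i ∈ Finset.range N, q i t * ℓ i t -
        ∑ t ∈ Finset.Icc 1 T, ℓ istar t ≤
      Real.log N / η +
        η / 2 * ∑ t ∈ Finset.Icc 1 T, ∑ i ∈ Finset.range N, q i t * (ℓ i t) ^ 2 := by
  have hWpos : ∀ i t, 0 < W i t := by
    intro i t
    induction t with
    | zero => simp [hW0]
    | succ n ih =>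
      rw [hWrec i (n + 1) (by omega)]
      simp only [Nat.add_sub_cancel]
      positivity
  have hne : (Finset.range N).Nonempty := ⟨istar, histar⟩
  have hWtotpos : ∀ t, 0 < Wtot t := fun t => by
    rw [hWtot]; exact Finset.sum_pos (fun i _ => hWpos i t) hne
  have hqsum : ∀ t, ∑ i ∈ Finset.range N, q i t = 1 := by
    intro t
    simp only [hq]
    rw [← Finset.sum_div, ← hWtot, div_self (hWtotpos _).ne']
  have hqpos : ∀ i t, 0 < q i t := by
    intro i t; rw [hq]; exact div_pos (hWpos _ _) (hWtotpos _)
  set A : ℕ → ℝ := fun t => ∑ i ∈ Finset.range N, q i t * ℓ i t with hA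
  set B : ℕ → ℝ := fun t => ∑ i ∈ Finset.range N, q i t * (ℓ i t) ^ 2 with hB
  -- per-step bound
  have hstep : ∀ t ≥ 1, Real.log (Wtot t) ≤
      Real.log (Wtot (t - 1)) - η * A t + η ^ 2 / 2 * B t := by
    intro t ht
    have hWt : Wtot t = Wtot (t - 1) * ∑ i ∈ Finset.range N, q i t * Real.exp (-η * ℓ i t) := by
      rw [hWtot, Finset.mul_sum]
      refine Finset.sum_congr rfl fun i _ => ?_
      rw [hWrec i t ht, hq, div_mul_eq_mul_div, mul_comm (Wtot (t - 1)),
        div_mul_cancel₀ _ (hWtotpos _).ne']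
    have hS : ∑ i ∈ Finset.range N, q i t * Real.exp (-η * ℓ i t) ≤
        1 - η * A t + η ^ 2 / 2 * B t := by
      have hb : ∀ i ∈ Finset.range N, q i t * Real.exp (-η * ℓ i t) ≤
          q i t * (1 - η * ℓ i t + (η * ℓ i t) ^ 2 / 2) := by
        intro i _
        refine mul_le_mul_of_nonneg_left ?_ (hqpos i t).le
        simpa using exp_neg_le_quad (x := η * ℓ i t) (mul_nonneg hη.le (hℓ i t))
      calc ∑ i ∈ Finset.range N, q i t * Real.exp (-η * ℓ i t)
          ≤ ∑ i ∈ Finset.range N, q i t * (1 - η * ℓ i t + (η * ℓ i t) ^ 2 / 2) :=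
            Finset.sum_le_sum hb
        _ = (∑ i ∈ Finset.range N, q i t) - η * A t + η ^ 2 / 2 * B t := by
            simp only [hA, hB, Finset.mul_sum, ← Finset.sum_sub_distrib,
              ← Finset.sum_add_distrib]
            exact Finset.sum_congr rfl fun i _ => by ring
        _ = 1 - η * A t + η ^ 2 / 2 * B t := by rw [hqsum t]
    have hSpos : 0 < ∑ i ∈ Finset.range N, q i t * Real.exp (-η * ℓ i t) :=
      Finset.sum_pos (fun i _ => mul_pos (hqpos i t) (Real.exp_pos _)) hne
    rw [hWt, Real.log_mul (hWtotpos _).ne' hSpos.ne']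
    have := Real.log_le_sub_one_of_pos hSpos
    linarith
  -- telescoping
  have htel : ∀ S : ℕ, Real.log (Wtot S) ≤
      Real.log (Wtot 0) + ∑ t ∈ Finset.Icc 1 S, (-(η * A t) + η ^ 2 / 2 * B t) := by
    intro S
    induction S with
    | zero => simp
    | succ n ih =>
      have h := hstep (n + 1) (by omega)
      simp only [Nat.add_sub_cancel] at h
      rw [Finset.sum_Icc_succ_top (by omega)]
      linarith
  -- lower bound via istar
  have hWi : ∀ t, W istar t = Real.exp (-η * ∑ s ∈ Finset.Icc 1 t, ℓ istar s) := by
    intro t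
    induction t with
    | zero => simp [hW0]
    | succ n ih =>
      rw [hWrec istar (n + 1) (by omega)]
      simp only [Nat.add_sub_cancel]
      rw [ih, ← Real.exp_add, Finset.sum_Icc_succ_top (by omega)]
      ring_nf
  have hlow : -(η * ∑ t ∈ Finset.Icc 1 T, ℓ istar t) ≤ Real.log (Wtot T) := by
    have h1 : W istar T ≤ Wtot T := by
      rw [hWtot]
      exact Finset.single_le_sum (fun i _ => (hWpos i T).le) histar
    have := Real.log_le_log (hWpos istar T) h1
    rwa [hWi, Real.log_exp, neg_mul] at this
  have hW0tot : Real.log (Wtot 0) = Real.log N := by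
    rw [hWtot]; simp [hW0]
  have hfin := (hlow.trans (htel T))
  have hsum1 : ∑ t ∈ Finset.Icc 1 T, (-(η * A t) + η ^ 2 / 2 * B t)
      = -(η * ∑ t ∈ Finset.Icc 1 T, A t) + η ^ 2 / 2 * ∑ t ∈ Finset.Icc 1 T, B t := by
    simp only [← neg_mul, Finset.sum_add_distrib, ← Finset.mul_sum]
  rw [hW0tot, hsum1] at hfin
  have h2 : 0 ≤ Real.log N + η * (∑ t ∈ Finset.Icc 1 T, ℓ istar t)
      - η * ∑ t ∈ Finset.Icc 1 T, A t + η ^ 2 / 2 * ∑ t ∈ Finset.Icc 1 T, B t := by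
    linarith
  have hdiv : ∑ t ∈ Finset.Icc 1 T, A t - ∑ t ∈ Finset.Icc 1 T, ℓ istar t ≤
      Real.log N / η + η / 2 * ∑ t ∈ Finset.Icc 1 T, B t := by
    rw [← sub_nonneg]
    have hexp : Real.log N / η + η / 2 * ∑ t ∈ Finset.Icc 1 T, B t -
        (∑ t ∈ Finset.Icc 1 T, A t - ∑ t ∈ Finset.Icc 1 T, ℓ istar t) =
        (Real.log N + η * (∑ t ∈ Finset.Icc 1 T, ℓ istar t)
          - η * ∑ t ∈ Finset.Icc 1 T, A t + η ^ 2 / 2 * ∑ t ∈ Finset.Icc 1 T, B t) / η := by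
      field_simp
      ring
    rw [hexp]
    exact div_nonneg h2 hη.le
  simpa [hA, hB] using hdiv
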